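/- Let V be an optimal computer. Then each of the sets 𝒵(V) = {T ∈ (0,1) : Z_V(T) is computable} and ℱ(V) = {T ∈ (0,1) : F_V(T) is computable} is dense in the open interval (0,1). -/

import Mathlib

open Filter Topology

/-- A set of finite binary strings is prefix-free if no string in it is a
proper prefix of another string in it. -/
def PrefixFree (S : Set (List Bool)) : Prop :=
  ∀ p ∈ S, ∀ q ∈ S, p <+: q → p = q

/-- A computer: a partial recursive function from finite binary strings to
finite binary strings whose domain is a nonempty prefix-free set. -/
structure Computer where
  f : List Bool →. List Bool
  partrec : Partrec f
  dom_nonempty : f.Dom.Nonempty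
  dom_prefixFree : PrefixFree f.Dom

/-- A computer `U` is optimal if for each computer `C` there is `d ∈ ℕ` such
that every `p ∈ Dom C` admits `q` with `U(q) = C(p)` and `|q| ≤ |p| + d`. -/
def Optimal (U : Computer) : Prop :=
  ∀ C : Computer, ∃ d : ℕ, ∀ p ∈ C.f.Dom,
    ∃ q : List Bool, U.f q = C.f p ∧ q.length ≤ p.length + d

/-- `H_C(s)`: the length of a shortest program for `C` printing `s`. -/
noncomputable def complexity (C : Computer) (s : List Bool) : ℕ :=
  sInf {n | ∃ p : List Bool, s ∈ C.f p ∧ p.length = n}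

/-- The `i`-th bit (for `i = 0, 1, 2, …`) of the base-two expansion of
`α - ⌊α⌋` with infinitely many zeros. -/
noncomputable def bitOf (α : ℝ) (i : ℕ) : Bool :=
  decide (⌊(α - ⌊α⌋) * 2 ^ (i + 1)⌋ % 2 = 1)

/-- `α↾n`: the first `n` bits of the base-two expansion of `α - ⌊α⌋`
with infinitely many zeros. -/
noncomputable def firstBits (α : ℝ) (n : ℕ) : List Bool :=
  (List.range n).map (bitOf α)

/-- A real `α` is computable if some total recursive `f : ℕ⁺ → ℚ` satisfies
`|α - f n| < 1/n` for all `n ≥ 1`. -/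
def ComputableReal (α : ℝ) : Prop :=
  ∃ f : ℕ → ℚ, Computable f ∧ ∀ n : ℕ, 0 < n → |α - (f n : ℝ)| < 1 / n

/-- `α` is weakly Chaitin `T`-random (w.r.t. the computer `U`). -/
def WeaklyChaitinTRandom (U : Computer) (T α : ℝ) : Prop :=
  ∃ c : ℕ, ∀ n : ℕ, 0 < n → T * n - c ≤ (complexity U (firstBits α n) : ℝ)

/-- `α` is Chaitin `T`-random (w.r.t. the computer `U`). -/
def ChaitinTRandom (U : Computer) (T α : ℝ) : Prop :=
  Tendsto (fun n : ℕ => (complexity U (firstBits α n) : ℝ) - T * n) atTop atTop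

/-- `α` is `T`-compressible (w.r.t. the computer `U`): `H(α↾n) ≤ Tn + o(n)`. -/
def TCompressible (U : Computer) (T α : ℝ) : Prop :=
  ∃ g : ℕ → ℝ, Tendsto (fun n : ℕ => g n / n) atTop (nhds 0) ∧
    ∀ n : ℕ, 0 < n → (complexity U (firstBits α n) : ℝ) ≤ T * n + g n

/-- The Boltzmann factor `2^(-|p|/T)` of a program `p`. -/
noncomputable def boltzmann (T : ℝ) (p : List Bool) : ℝ :=
  (2 : ℝ) ^ (-(p.length : ℝ) / T)

/-- Partition function `Z_C(T) = Σ_{p ∈ Dom C} 2^(-|p|/T)`. -/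
noncomputable def Zfun (C : Computer) (T : ℝ) : ℝ :=
  ∑' p : C.f.Dom, boltzmann T p.1

/-- Free energy `F_C(T) = -T log₂ Z_C(T)`. -/
noncomputable def Ffun (C : Computer) (T : ℝ) : ℝ :=
  -T * Real.logb 2 (Zfun C T)

/-- Energy `E_C(T) = Z_C(T)⁻¹ Σ_{p ∈ Dom C} |p| 2^(-|p|/T)`. -/
noncomputable def Efun (C : Computer) (T : ℝ) : ℝ :=
  (Zfun C T)⁻¹ * ∑' p : C.f.Dom, (p.1.length : ℝ) * boltzmann T p.1

/-- Statistical mechanical entropy `S_C(T) = (E_C(T) - F_C(T))/T`. -/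
noncomputable def Sfun (C : Computer) (T : ℝ) : ℝ :=
  (Efun C T - Ffun C T) / T

/-- `𝒵(V)`: the set of `T ∈ (0,1)` with `Z_V(T)` computable. -/
def setZ (V : Computer) : Set ℝ := {T | T ∈ Set.Ioo 0 1 ∧ ComputableReal (Zfun V T)}

/-- `ℱ(V)`: the set of `T ∈ (0,1)` with `F_V(T)` computable. -/
def setF (V : Computer) : Set ℝ := {T | T ∈ Set.Ioo 0 1 ∧ ComputableReal (Ffun V T)}

/-- `ℰ(V)`: the set of `T ∈ (0,1)` with `E_V(T)` computable. -/
def setE (V : Computer) : Set ℝ := {T | T ∈ Set.Ioo 0 1 ∧ ComputableReal (Efun V T)}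

/-- `𝒮(V)`: the set of `T ∈ (0,1)` with `S_V(T)` computable. -/
def setS (V : Computer) : Set ℝ := {T | T ∈ Set.Ioo 0 1 ∧ ComputableReal (Sfun V T)}

/-- `FP_w` (w.r.t. the optimal computer `U` fixing `H`): the set of `T ∈ (0,1)`
that are weakly Chaitin `T`-random and `T`-compressible. -/
def FPw (U : Computer) : Set ℝ :=
  {T | T ∈ Set.Ioo 0 1 ∧ WeaklyChaitinTRandom U T T ∧ TCompressible U T T}

/-- `FP` (w.r.t. the optimal computer `U` fixing `H`): the set of `T ∈ (0,1)`
that are Chaitin `T`-random and `T`-compressible. -/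
def FP (U : Computer) : Set ℝ :=
  {T | T ∈ Set.Ioo 0 1 ∧ ChaitinTRandom U T T ∧ TCompressible U T T}

/-- A computer is physically reasonable if its domain contains two strings of
different lengths. -/
def PhysicallyReasonable (C : Computer) : Prop :=
  ∃ p ∈ C.f.Dom, ∃ q ∈ C.f.Dom, p.length ≠ q.length

/-- A computable measure machine: `Z_C(1)` is a computable real. -/
def ComputableMeasureMachine (C : Computer) : Prop :=
  ComputableReal (Zfun C 1)

/-- `D` is the composition `C₀ ⊘ C₁ ⊘ ⋯ ⊘ C_{N-1}`: its domain consists of the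
concatenations `p₀p₁⋯p_{N-1}` with each `pᵢ ∈ Dom Cᵢ`, and on such a
concatenation it returns `C₀(p₀)`. -/
def IsComposition {N : ℕ} (C : Fin N → Computer) (hN : 0 < N) (D : Computer) : Prop :=
  (∀ l, l ∈ D.f.Dom ↔
      ∃ ps : Fin N → List Bool, (∀ i, ps i ∈ (C i).f.Dom) ∧ l = (List.ofFn ps).flatten) ∧
  (∀ ps : Fin N → List Bool, (∀ i, ps i ∈ (C i).f.Dom) →
      D.f ((List.ofFn ps).flatten) = (C ⟨0, hN⟩).f (ps ⟨0, hN⟩))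

/-- A sequence of computers is recursive if a single partial recursive function
uniformly computes all of them. -/
def RecursiveSeq (V : ℕ → Computer) : Prop :=
  ∃ F : ℕ × List Bool →. List Bool, Partrec F ∧ ∀ n p, (V n).f p = F (n, p)

section KraftAux

lemma kraft_finset : ∀ (N : ℕ) (F : Finset (List Bool)),
    (∀ p ∈ F, p.length ≤ N) → (∀ p ∈ F, ∀ q ∈ F, p <+: q → p = q) →
    ∑ p ∈ F, ((2:ℝ)⁻¹) ^ p.length ≤ 1 := by
  intro N
  induction N with
  | zero =>
    intro F hlen hpf
    have hsub : F ⊆ {([] : List Bool)} := by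
      intro p hp
      simpa using List.length_eq_zero_iff.mp (Nat.le_zero.mp (hlen p hp))
    calc ∑ p ∈ F, ((2:ℝ)⁻¹) ^ p.length
        ≤ ∑ p ∈ ({([] : List Bool)} : Finset (List Bool)), ((2:ℝ)⁻¹) ^ p.length :=
          Finset.sum_le_sum_of_subset_of_nonneg hsub (fun p _ _ => by positivity)
      _ = 1 := by simp
  | succ N ih =>
    intro F hlen hpf
    by_cases hnil : ([] : List Bool) ∈ F
    · have hsub : F ⊆ {([] : List Bool)} := by
        intro p hp
        simpa using (hpf [] hnil p hp ⟨p, rfl⟩).symm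
      calc ∑ p ∈ F, ((2:ℝ)⁻¹) ^ p.length
          ≤ ∑ p ∈ ({([] : List Bool)} : Finset (List Bool)), ((2:ℝ)⁻¹) ^ p.length :=
            Finset.sum_le_sum_of_subset_of_nonneg hsub (fun p _ _ => by positivity)
        _ = 1 := by simp
    · have key : ∀ b : Bool,
          ∑ p ∈ F.filter (fun p => p.head? = some b), ((2:ℝ)⁻¹) ^ p.length ≤ 1/2 := by
        intro b
        set Fb := F.filter (fun p => p.head? = some b) with hFb
        have hmemF : ∀ p ∈ Fb, p ∈ F := fun p hp => (Finset.mem_filter.mp hp).1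
        have hcons : ∀ p ∈ Fb, p = b :: p.tail := by
          intro p hp
          have h2 := (Finset.mem_filter.mp hp).2
          obtain ⟨a, t, rfl⟩ := List.exists_cons_of_ne_nil
            (fun h => hnil (h ▸ hmemF p hp))
          simp only [List.head?_cons, Option.some.injEq] at h2
          simp [h2]
        have hinj : ∀ p ∈ Fb, ∀ q ∈ Fb, p.tail = q.tail → p = q := by
          intro p hp q hq h
          rw [hcons p hp, hcons q hq, h]
        have himg : ∑ t ∈ Fb.image List.tail, ((2:ℝ)⁻¹) ^ t.length
            = ∑ p ∈ Fb, ((2:ℝ)⁻¹) ^ p.tail.length :=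
          Finset.sum_image hinj
        have hG : ∑ t ∈ Fb.image List.tail, ((2:ℝ)⁻¹) ^ t.length ≤ 1 := by
          apply ih
          · intro t ht
            obtain ⟨p, hp, rfl⟩ := Finset.mem_image.mp ht
            have h1 := hlen p (hmemF p hp)
            have h2 : p.length = p.tail.length + 1 := by
              conv_lhs => rw [hcons p hp]
              simp
            omega
          · intro t ht u hu hpre
            obtain ⟨p, hp, rfl⟩ := Finset.mem_image.mp ht
            obtain ⟨q, hq, rfl⟩ := Finset.mem_image.mp hu
            have hpq : p <+: q := by
              rw [hcons p hp, hcons q hq]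
              obtain ⟨w, hw⟩ := hpre
              exact ⟨w, by simp [hw]⟩
            have := hpf p (hmemF p hp) q (hmemF q hq) hpq
            rw [this]
        calc ∑ p ∈ Fb, ((2:ℝ)⁻¹) ^ p.length
            = ∑ p ∈ Fb, (2:ℝ)⁻¹ * ((2:ℝ)⁻¹) ^ p.tail.length := by
              apply Finset.sum_congr rfl
              intro p hp
              conv_lhs => rw [hcons p hp]
              simp [pow_succ]
              ring
          _ = (2:ℝ)⁻¹ * ∑ p ∈ Fb, ((2:ℝ)⁻¹) ^ p.tail.length := by rw [Finset.mul_sum]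
          _ = (2:ℝ)⁻¹ * ∑ t ∈ Fb.image List.tail, ((2:ℝ)⁻¹) ^ t.length := by rw [himg]
          _ ≤ (2:ℝ)⁻¹ * 1 := by nlinarith [hG]
          _ = 1/2 := by norm_num
      have hsplit := Finset.sum_filter_add_sum_filter_not F (fun p => p.head? = some true)
        (fun p => ((2:ℝ)⁻¹) ^ p.length)
      have hfneg : F.filter (fun p => ¬ p.head? = some true)
          = F.filter (fun p => p.head? = some false) := by
        apply Finset.filter_congr
        intro p hp
        obtain ⟨a, t, rfl⟩ := List.exists_cons_of_ne_nil (fun h => hnil (h ▸ hp))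
        cases a <;> simp
      have h1 := key true
      have h2 := key false
      rw [hfneg] at hsplit
      linarith

end KraftAux

section ZFAux

lemma kraft_summable {S : Set (List Bool)} (hpf : PrefixFree S) :
    Summable (fun p : S => ((2:ℝ)⁻¹) ^ (p.1.length)) := by
  apply summable_of_sum_le (c := 1) (fun p => by positivity)
  intro u
  have himg : ∑ p ∈ u.image Subtype.val, ((2:ℝ)⁻¹) ^ p.length
      = ∑ x ∈ u, ((2:ℝ)⁻¹) ^ (x.1.length) :=
    Finset.sum_image (fun a _ b _ h => Subtype.ext h)
  rw [← himg]
  exact kraft_finset ((u.image Subtype.val).sup List.length) _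
    (fun p hp => Finset.le_sup hp)
    (fun p hp q hq h => by
      obtain ⟨x, _, rfl⟩ := Finset.mem_image.mp hp
      obtain ⟨y, _, rfl⟩ := Finset.mem_image.mp hq
      exact hpf x.1 x.2 y.1 y.2 h)

lemma boltzmann_pos {T : ℝ} (p : List Bool) : 0 < boltzmann T p :=
  Real.rpow_pos_of_pos two_pos _

lemma boltzmann_le_kraft {T : ℝ} (hT0 : 0 < T) (hT1 : T ≤ 1) (p : List Bool) :
    boltzmann T p ≤ ((2:ℝ)⁻¹) ^ p.length := by
  have h1 : ((2:ℝ)⁻¹) ^ p.length = (2:ℝ) ^ (-(p.length:ℝ)) := by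
    rw [Real.rpow_neg (by norm_num), Real.rpow_natCast, inv_pow]
  rw [h1, boltzmann]
  apply Real.rpow_le_rpow_of_exponent_le one_le_two
  rw [div_le_iff₀ hT0]
  nlinarith [(p.length.cast_nonneg : (0:ℝ) ≤ p.length)]

lemma summable_boltzmann (V : Computer) {T : ℝ} (hT0 : 0 < T) (hT1 : T ≤ 1) :
    Summable (fun p : V.f.Dom => boltzmann T p.1) :=
  Summable.of_nonneg_of_le (fun p => (boltzmann_pos p.1).le)
    (fun p => boltzmann_le_kraft hT0 hT1 p.1) (kraft_summable V.dom_prefixFree)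

lemma Zfun_pos (V : Computer) {T : ℝ} (hT0 : 0 < T) (hT1 : T ≤ 1) : 0 < Zfun V T := by
  obtain ⟨p0, hp0⟩ := V.dom_nonempty
  exact Summable.tsum_pos (summable_boltzmann V hT0 hT1) (fun p => (boltzmann_pos p.1).le)
    ⟨p0, hp0⟩ (boltzmann_pos p0)

lemma Zfun_continuousOn (V : Computer) : ContinuousOn (Zfun V) (Set.Ioo 0 1) := by
  rw [continuousOn_iff_continuous_restrict]
  have heq : (Set.Ioo (0:ℝ) 1).restrict (Zfun V)
      = fun x : Set.Ioo (0:ℝ) 1 => ∑' p : V.f.Dom, boltzmann x.1 p.1 := rfl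
  show Continuous (fun x : Set.Ioo (0:ℝ) 1 => ∑' p : V.f.Dom, boltzmann x.1 p.1)
  apply continuous_tsum (u := fun p : V.f.Dom => ((2:ℝ)⁻¹) ^ (p.1.length))
  · intro p
    apply Continuous.rpow continuous_const
      (continuous_const.div continuous_subtype_val (fun x => ne_of_gt x.2.1))
    intro x
    exact Or.inl two_ne_zero
  · exact kraft_summable V.dom_prefixFree
  · intro p x
    rw [Real.norm_eq_abs, abs_of_nonneg (boltzmann_pos p.1).le]
    exact boltzmann_le_kraft x.2.1 x.2.2.le p.1

lemma Zfun_strictMono (V : Computer) (hne : ∀ p ∈ V.f.Dom, p ≠ [])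
    {T₁ T₂ : ℝ} (h0 : 0 < T₁) (h12 : T₁ < T₂) (h1 : T₂ ≤ 1) :
    Zfun V T₁ < Zfun V T₂ := by
  obtain ⟨p0, hp0⟩ := V.dom_nonempty
  apply Summable.tsum_lt_tsum (i := (⟨p0, hp0⟩ : V.f.Dom))
  · intro p
    apply Real.rpow_le_rpow_of_exponent_le one_le_two
    rw [neg_div, neg_div, neg_le_neg_iff]
    gcongr
  · have hn : 0 < (p0.length : ℝ) := by
      have h := hne p0 hp0
      have : p0.length ≠ 0 := fun hc => h (List.length_eq_zero_iff.mp hc)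
      exact_mod_cast Nat.pos_of_ne_zero this
    apply Real.rpow_lt_rpow_of_exponent_lt one_lt_two
    rw [neg_div, neg_div, neg_lt_neg_iff]
    exact div_lt_div_of_pos_left hn h0 h12
  · exact summable_boltzmann V h0 (by linarith)
  · exact summable_boltzmann V (h0.trans h12) h1

lemma Ffun_continuousOn (V : Computer) : ContinuousOn (Ffun V) (Set.Ioo 0 1) := by
  have h := Zfun_continuousOn V
  have hne : ∀ T ∈ Set.Ioo (0:ℝ) 1, Zfun V T ≠ 0 :=
    fun T hT => (Zfun_pos V hT.1 hT.2.le).ne'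
  have : ContinuousOn (fun T => -T * (Real.log (Zfun V T) / Real.log 2))
      (Set.Ioo (0:ℝ) 1) :=
    (continuous_neg.continuousOn).mul ((h.log hne).div_const _)
  exact this.congr (fun T _ => by rw [Ffun, Real.logb])

lemma Ffun_strictAnti (V : Computer) {p0 q0 : List Bool} (hp0 : p0 ∈ V.f.Dom)
    (hq0 : q0 ∈ V.f.Dom) (hpq : p0 ≠ q0)
    {T₁ T₂ : ℝ} (h0 : 0 < T₁) (h12 : T₁ < T₂) (h1 : T₂ ≤ 1) :
    Ffun V T₂ < Ffun V T₁ := by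
  have hT2 : 0 < T₂ := h0.trans h12
  have hr1 : 1 < T₂ / T₁ := (one_lt_div h0).mpr h12
  have hZbpos : 0 < Zfun V T₂ := Zfun_pos V hT2 h1
  have hsum2 : Summable (fun p : V.f.Dom => boltzmann T₂ p.1) := summable_boltzmann V hT2 h1
  have hc_le : ∀ p : V.f.Dom, boltzmann T₂ p.1 ≤ Zfun V T₂ :=
    fun p => Summable.le_tsum hsum2 p (fun q _ => (boltzmann_pos q.1).le)
  have hsplitpow : ∀ x : ℝ, 0 < x → x ^ (T₂ / T₁) = x * x ^ (T₂ / T₁ - 1) := by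
    intro x hx
    conv_lhs => rw [show T₂ / T₁ = 1 + (T₂ / T₁ - 1) by ring]
    rw [Real.rpow_add hx, Real.rpow_one]
  have hrpow : ∀ p : List Bool, boltzmann T₁ p = (boltzmann T₂ p) ^ (T₂ / T₁) := by
    intro p
    rw [boltzmann, boltzmann, ← Real.rpow_mul (by norm_num)]
    congr 1
    field_simp [h0.ne', hT2.ne']
  have hterm_le : ∀ p : V.f.Dom,
      boltzmann T₁ p.1 ≤ boltzmann T₂ p.1 * Zfun V T₂ ^ (T₂ / T₁ - 1) := by
    intro p
    rw [hrpow p.1, hsplitpow _ (boltzmann_pos p.1)]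
    exact mul_le_mul_of_nonneg_left
      (Real.rpow_le_rpow (boltzmann_pos p.1).le (hc_le p) (by linarith))
      (boltzmann_pos p.1).le
  have hterm_lt : boltzmann T₁ p0 < boltzmann T₂ p0 * Zfun V T₂ ^ (T₂ / T₁ - 1) := by
    have hlt : boltzmann T₂ p0 < Zfun V T₂ := by
      have hsum_pair := Summable.sum_le_tsum ({⟨p0, hp0⟩, ⟨q0, hq0⟩} : Finset V.f.Dom)
        (fun q _ => (boltzmann_pos q.1).le) hsum2
      rw [Finset.sum_pair (fun h => hpq (congrArg Subtype.val h))] at hsum_pair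
      have := boltzmann_pos (T := T₂) q0
      calc boltzmann T₂ p0 < boltzmann T₂ p0 + boltzmann T₂ q0 := by linarith
        _ ≤ Zfun V T₂ := hsum_pair
    rw [hrpow p0, hsplitpow _ (boltzmann_pos p0)]
    exact mul_lt_mul_of_pos_left
      (Real.rpow_lt_rpow (boltzmann_pos p0).le hlt (by linarith))
      (boltzmann_pos p0)
  have hZ1 : Zfun V T₁ < Zfun V T₂ ^ (T₂ / T₁) := by
    have hsum1 : Summable (fun p : V.f.Dom => boltzmann T₁ p.1) :=
      summable_boltzmann V h0 (by linarith)
    have hsumK : Summable (fun p : V.f.Dom => boltzmann T₂ p.1 * Zfun V T₂ ^ (T₂ / T₁ - 1)) :=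
      hsum2.mul_right _
    have h := Summable.tsum_lt_tsum (i := (⟨p0, hp0⟩ : V.f.Dom)) hterm_le hterm_lt hsum1 hsumK
    rw [tsum_mul_right] at h
    calc Zfun V T₁ = ∑' p : V.f.Dom, boltzmann T₁ p.1 := rfl
      _ < Zfun V T₂ * Zfun V T₂ ^ (T₂ / T₁ - 1) := h
      _ = Zfun V T₂ ^ (T₂ / T₁) := (hsplitpow _ hZbpos).symm
  have hlog : Real.logb 2 (Zfun V T₁) < (T₂ / T₁) * Real.logb 2 (Zfun V T₂) := by
    have h2 := Real.logb_lt_logb (b := 2) one_lt_two (Zfun_pos V h0 (by linarith)) hZ1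
    rwa [Real.logb_rpow_eq_mul_logb_of_pos hZbpos] at h2
  have hF2 : Ffun V T₂ = -T₁ * ((T₂ / T₁) * Real.logb 2 (Zfun V T₂)) := by
    rw [Ffun]
    field_simp [h0.ne']
  rw [hF2, Ffun]
  exact mul_lt_mul_of_neg_left hlog (by linarith)

lemma computableReal_rat (q : ℚ) : ComputableReal (q : ℝ) := by
  refine ⟨fun _ => q, Computable.const q, fun n hn => ?_⟩
  simp only [sub_self, abs_zero]
  exact div_pos one_pos (by exact_mod_cast hn)

lemma Zfun_singleton (V : Computer) {p0 : List Bool} (hp0 : p0 ∈ V.f.Dom)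
    (huniq : ∀ p ∈ V.f.Dom, p = p0) (T : ℝ) : Zfun V T = boltzmann T p0 := by
  rw [Zfun]
  exact tsum_eq_single (⟨p0, hp0⟩ : V.f.Dom)
    (fun b hb => absurd (Subtype.ext (huniq b.1 b.2)) hb)

lemma dense_helper {s : Set ℝ}
    (hmem : ∀ a b : ℝ, 0 < a → a < b → b < 1 → ∃ T ∈ Set.Ioo a b, T ∈ s) :
    Set.Ioo (0:ℝ) 1 ⊆ closure s := by
  intro x hx
  rw [Metric.mem_closure_iff]
  intro ε hε
  obtain ⟨a, ha1, ha2⟩ := exists_between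
    (max_lt hx.1 (by linarith) : max 0 (x - ε) < x)
  obtain ⟨b, hb1, hb2⟩ := exists_between
    (lt_min hx.2 (by linarith) : x < min 1 (x + ε))
  have ha0 : 0 < a := lt_of_le_of_lt (le_max_left _ _) ha1
  have haε : x - ε < a := lt_of_le_of_lt (le_max_right _ _) ha1
  have hb1' : b < 1 := lt_of_lt_of_le hb2 (min_le_left _ _)
  have hbε : b < x + ε := lt_of_lt_of_le hb2 (min_le_right _ _)
  obtain ⟨T, hT, hTs⟩ := hmem a b ha0 (ha2.trans hb1) hb1'
  refine ⟨T, hTs, ?_⟩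
  rw [Real.dist_eq, abs_lt]
  constructor <;> [skip; skip] <;>
    · have := hT.1; have := hT.2; linarith

end ZFAux

/-- For optimal `V`, each of `𝒵(V)` and `ℱ(V)` is dense in the
open interval `(0,1)`. -/
theorem zSet_fSet_dense (V : Computer) (hV : Optimal V) :
    Set.Ioo (0 : ℝ) 1 ⊆ closure (setZ V) ∧ Set.Ioo (0 : ℝ) 1 ⊆ closure (setF V) := by
  classical
  by_cases hnil : ([] : List Bool) ∈ V.f.Dom
  · -- the domain is the singleton {[]}: Z ≡ 1 and F ≡ 0
    have huniq : ∀ p ∈ V.f.Dom, p = [] :=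
      fun p hp => (V.dom_prefixFree [] hnil p hp ⟨p, rfl⟩).symm
    have hZ : ∀ T : ℝ, Zfun V T = 1 := by
      intro T
      rw [Zfun_singleton V hnil huniq, boltzmann]
      simp
    have hF : ∀ T : ℝ, Ffun V T = 0 := by
      intro T
      rw [Ffun, hZ]
      simp
    constructor <;> intro x hx <;> apply subset_closure
    · exact ⟨hx, by rw [hZ]; simpa using computableReal_rat 1⟩
    · exact ⟨hx, by rw [hF]; simpa using computableReal_rat 0⟩
  · have hne : ∀ p ∈ V.f.Dom, p ≠ [] := fun p hp h => hnil (h ▸ hp)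
    obtain ⟨p0, hp0⟩ := V.dom_nonempty
    constructor
    · -- density of 𝒵(V)
      apply dense_helper
      intro a b ha hab hb1
      have hIcc : Set.Icc a b ⊆ Set.Ioo 0 1 :=
        fun y hy => ⟨lt_of_lt_of_le ha hy.1, lt_of_le_of_lt hy.2 hb1⟩
      have hZab : Zfun V a < Zfun V b := Zfun_strictMono V hne ha hab hb1.le
      obtain ⟨q, hq1, hq2⟩ := exists_rat_btwn hZab
      obtain ⟨T, hT, hZT⟩ := intermediate_value_Ioo hab.le
        ((Zfun_continuousOn V).mono hIcc) ⟨hq1, hq2⟩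
      exact ⟨T, hT, hIcc (Set.Ioo_subset_Icc_self hT),
        by rw [hZT]; exact computableReal_rat q⟩
    · -- density of ℱ(V)
      by_cases hsing : ∃ q0 ∈ V.f.Dom, q0 ≠ p0
      · obtain ⟨q0, hq0, hq0ne⟩ := hsing
        apply dense_helper
        intro a b ha hab hb1
        have hIcc : Set.Icc a b ⊆ Set.Ioo 0 1 :=
          fun y hy => ⟨lt_of_lt_of_le ha hy.1, lt_of_le_of_lt hy.2 hb1⟩
        have hFab : Ffun V b < Ffun V a :=
          Ffun_strictAnti V hp0 hq0 (Ne.symm hq0ne) ha hab hb1.le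
        obtain ⟨q, hq1, hq2⟩ := exists_rat_btwn hFab
        obtain ⟨T, hT, hFT⟩ := intermediate_value_Ioo' hab.le
          ((Ffun_continuousOn V).mono hIcc) ⟨hq1, hq2⟩
        exact ⟨T, hT, hIcc (Set.Ioo_subset_Icc_self hT),
          by rw [hFT]; exact computableReal_rat q⟩
      · -- domain is the singleton {p0}: F ≡ |p0|
        push_neg at hsing
        have hFn : ∀ T ∈ Set.Ioo (0:ℝ) 1, Ffun V T = (p0.length : ℝ) := by
          intro T hT
          rw [Ffun, Zfun_singleton V hp0 hsing, boltzmann,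
            Real.logb_rpow (by norm_num) (by norm_num)]
          field_simp [hT.1.ne']
        intro x hx
        apply subset_closure
        exact ⟨hx, by rw [hFn x hx]; simpa using computableReal_rat (p0.length : ℚ)⟩
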